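/- Let a ∈ ℝ and let B be a real number with m((x,∞))·(S(x) − S(a)) ≤ B for all x ≥ a. Then for every integer n ≥ 0 and every x > a, J(Kⁿ1)(x) ≤ B · ∑_{i=0}^{n} B^{n−i} Kⁱ1(x), where 1 denotes the constant function equal to 1 and Kⁿ denotes the n-fold iterate of K. -/

import Mathlib

open MeasureTheory Set
open scoped ENNReal Topology

/-- The operator `J`: `Jf(x) = (S(x) − S(a)) · ∫_{(x,∞)} f dm`. -/
noncomputable def Jop (S : ℝ → ℝ) (m : Measure ℝ) (a : ℝ) (f : ℝ → ℝ≥0∞) : ℝ → ℝ≥0∞ :=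
  fun x => ENNReal.ofReal (S x - S a) * ∫⁻ y in Ioi x, f y ∂m

/-- The operator `K`: `Kf(x) = ∫_{(a,x]} (S(y) − S(a)) f(y) dm(y)`. -/
noncomputable def Kop (S : ℝ → ℝ) (m : Measure ℝ) (a : ℝ) (f : ℝ → ℝ≥0∞) : ℝ → ℝ≥0∞ :=
  fun x => ∫⁻ y in Ioc a x, ENNReal.ofReal (S y - S a) * f y ∂m

lemma Kop_mono (S : ℝ → ℝ) (m : Measure ℝ) (a : ℝ) (f : ℝ → ℝ≥0∞) : Monotone (Kop S m a f) :=
  fun _ _ hxy => lintegral_mono_set (Ioc_subset_Ioc_right hxy)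

lemma iterK_meas (S : ℝ → ℝ) (m : Measure ℝ) (a : ℝ) (n : ℕ) :
    Measurable ((Kop S m a)^[n] (fun _ => 1)) := by
  cases n with
  | zero => exact measurable_const
  | succ k =>
    rw [Function.iterate_succ_apply']
    exact (Kop_mono S m a _).measurable

lemma Ici_bound (S : ℝ → ℝ) (hScont : Continuous S)
    (m : Measure ℝ) [IsFiniteMeasure m] (a B : ℝ)
    (hB : ∀ x : ℝ, a ≤ x → m (Ioi x) * ENNReal.ofReal (S x - S a) ≤ ENNReal.ofReal B)
    (z : ℝ) (hz : a < z) : m (Ici z) * ENNReal.ofReal (S z - S a) ≤ ENNReal.ofReal B := by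
  have hne : (𝓝[<] z).NeBot := nhdsLT_neBot z
  have htend : Filter.Tendsto (fun w => m (Ici z) * ENNReal.ofReal (S w - S a)) (𝓝[<] z)
      (𝓝 (m (Ici z) * ENNReal.ofReal (S z - S a))) := by
    apply ENNReal.Tendsto.const_mul
    · exact (ENNReal.continuous_ofReal.tendsto _).comp
        (((hScont.tendsto z).sub tendsto_const_nhds).mono_left nhdsWithin_le_nhds)
    · exact Or.inr (measure_ne_top m _)
  refine le_of_tendsto htend ?_
  filter_upwards [Ioo_mem_nhdsLT_of_mem (show z ∈ Ioc a z from ⟨hz, le_refl z⟩)] with w hw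
  calc m (Ici z) * ENNReal.ofReal (S w - S a)
      ≤ m (Ioi w) * ENNReal.ofReal (S w - S a) :=
        mul_le_mul_left (measure_mono (fun t ht => lt_of_lt_of_le hw.2 ht)) _
    _ ≤ ENNReal.ofReal B := hB w hw.1.le

lemma key_step (S : ℝ → ℝ) (hScont : Continuous S)
    (m : Measure ℝ) [IsFiniteMeasure m] (a B : ℝ)
    (hB : ∀ x : ℝ, a ≤ x → m (Ioi x) * ENNReal.ofReal (S x - S a) ≤ ENNReal.ofReal B)
    (hB' : ∀ z : ℝ, a < z → m (Ici z) * ENNReal.ofReal (S z - S a) ≤ ENNReal.ofReal B)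
    (n : ℕ) (x : ℝ) (hx : a < x) :
    Jop S m a ((Kop S m a)^[n + 1] (fun _ => 1)) x ≤
      ENNReal.ofReal B * (Kop S m a)^[n + 1] (fun _ => 1) x +
        ENNReal.ofReal B * Jop S m a ((Kop S m a)^[n] (fun _ => 1)) x := by
  set f := (Kop S m a)^[n] (fun _ => 1) with hf
  have hfm : Measurable f := iterK_meas S m a n
  set g : ℝ → ℝ≥0∞ := fun z => ENNReal.ofReal (S z - S a) * f z with hg
  have hgm : Measurable g :=
    (ENNReal.measurable_ofReal.comp ((hScont.measurable).sub measurable_const)).mul hfm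
  set C := (Kop S m a)^[n + 1] (fun _ => 1) x with hC
  -- decompose Kop f y for y > x
  have hdec : ∫⁻ y in Ioi x, (Kop S m a)^[n + 1] (fun _ => 1) y ∂m =
      C * m (Ioi x) + ∫⁻ y in Ioi x, (∫⁻ z in Ioc x y, g z ∂m) ∂m := by
    rw [← setLIntegral_const, ← lintegral_add_left measurable_const]
    refine setLIntegral_congr_fun measurableSet_Ioi (fun y hy => ?_)
    have hy : x < y := hy
    rw [Function.iterate_succ_apply', hC, Function.iterate_succ_apply']
    show Kop S m a f y = Kop S m a f x + _
    unfold Kop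
    rw [← Ioc_union_Ioc_eq_Ioc (le_of_lt hx) hy.le,
      lintegral_union measurableSet_Ioc (Ioc_disjoint_Ioc_of_le le_rfl)]
  -- swap the double integral
  have hswap : ∫⁻ y in Ioi x, (∫⁻ z in Ioc x y, g z ∂m) ∂m
      = ∫⁻ z in Ioi x, g z * m (Ici z) ∂m := by
    have h1 : ∀ y : ℝ, ∫⁻ z in Ioc x y, g z ∂m = ∫⁻ z in Ioi x, (Iic y).indicator g z ∂m := by
      intro y
      rw [lintegral_indicator measurableSet_Iic, Measure.restrict_restrict measurableSet_Iic,
        inter_comm, Ioi_inter_Iic]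
    simp_rw [h1]
    rw [lintegral_lintegral_swap]
    · refine setLIntegral_congr_fun measurableSet_Ioi (fun z hz => ?_)
      have hz : x < z := hz
      have h2 : ∀ y : ℝ, (Iic y).indicator g z = (Ici z).indicator (fun _ => g z) y := by
        intro y
        simp [Set.indicator_apply, Set.mem_Iic, Set.mem_Ici]
      simp_rw [h2]
      rw [lintegral_indicator measurableSet_Ici, Measure.restrict_restrict measurableSet_Ici,
        setLIntegral_const]
      have : Ici z ∩ Ioi x = Ici z := inter_eq_left.mpr (fun t ht => hz.trans_le ht)
      rw [this]
    · have : (Function.uncurry fun (y z : ℝ) => (Iic y).indicator g z)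
          = {p : ℝ × ℝ | p.2 ≤ p.1}.indicator (fun p => g p.2) := by
        funext p
        simp [Function.uncurry, Set.indicator_apply, Set.mem_Iic]
      rw [this]
      exact ((hgm.comp measurable_snd).indicator
        (measurableSet_le measurable_snd measurable_fst)).aemeasurable
  -- assemble
  have step1 : Jop S m a ((Kop S m a)^[n + 1] (fun _ => 1)) x
      = m (Ioi x) * ENNReal.ofReal (S x - S a) * C
        + ENNReal.ofReal (S x - S a) * ∫⁻ z in Ioi x, g z * m (Ici z) ∂m := by
    unfold Jop
    rw [hdec, hswap, mul_add]
    congr 1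
    ring
  rw [step1]
  refine add_le_add (mul_le_mul_left (hB x hx.le) C) ?_
  rw [← lintegral_const_mul' _ _ ENNReal.ofReal_ne_top]
  have hpt : ∀ z ∈ Ioi x, ENNReal.ofReal (S x - S a) * (g z * m (Ici z))
      ≤ ENNReal.ofReal B * (ENNReal.ofReal (S x - S a) * f z) := by
    intro z hz
    have : ENNReal.ofReal (S x - S a) * (g z * m (Ici z))
        = (m (Ici z) * ENNReal.ofReal (S z - S a)) * (ENNReal.ofReal (S x - S a) * f z) := by
      rw [hg]; ring
    rw [this]
    exact mul_le_mul_left (hB' z (hx.trans hz)) _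
  calc ∫⁻ z in Ioi x, ENNReal.ofReal (S x - S a) * (g z * m (Ici z)) ∂m
      ≤ ∫⁻ z in Ioi x, ENNReal.ofReal B * (ENNReal.ofReal (S x - S a) * f z) ∂m :=
        setLIntegral_mono' measurableSet_Ioi hpt
    _ = ENNReal.ofReal B * Jop S m a f x := by
        rw [lintegral_const_mul' _ _ ENNReal.ofReal_ne_top,
          lintegral_const_mul' _ _ ENNReal.ofReal_ne_top]
        rfl

/-- If `m((x,∞))·(S(x) − S(a)) ≤ B` for all `x ≥ a`, then for every `n ≥ 0`
and every `x > a`, `J(Kⁿ1)(x) ≤ B · ∑_{i=0}^{n} B^{n−i} Kⁱ1(x)`. -/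
theorem J_iterateK_le
    (S : ℝ → ℝ) (hScont : Continuous S) (hSmono : StrictMono S)
    (m : Measure ℝ) [IsFiniteMeasure m]
    (a B : ℝ)
    (hB : ∀ x : ℝ, a ≤ x → m (Ioi x) * ENNReal.ofReal (S x - S a) ≤ ENNReal.ofReal B) :
    ∀ (n : ℕ) (x : ℝ), a < x →
      Jop S m a ((Kop S m a)^[n] (fun _ => 1)) x ≤
        ENNReal.ofReal B *
          ∑ i ∈ Finset.range (n + 1),
            ENNReal.ofReal B ^ (n - i) * (Kop S m a)^[i] (fun _ => 1) x := by
  have hB' := Ici_bound S hScont m a B hB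
  intro n
  induction n with
  | zero =>
    intro x hx
    have h0 : Jop S m a ((Kop S m a)^[0] (fun _ => 1)) x
        = m (Ioi x) * ENNReal.ofReal (S x - S a) := by
      simp [Jop, mul_comm]
    rw [h0]
    simpa using hB x hx.le
  | succ n ih =>
    intro x hx
    have h1 := key_step S hScont m a B hB hB' n x hx
    have h2 := ih x hx
    calc Jop S m a ((Kop S m a)^[n + 1] (fun _ => 1)) x
        ≤ ENNReal.ofReal B * (Kop S m a)^[n + 1] (fun _ => 1) x +
            ENNReal.ofReal B * Jop S m a ((Kop S m a)^[n] (fun _ => 1)) x := h1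
      _ ≤ ENNReal.ofReal B * (Kop S m a)^[n + 1] (fun _ => 1) x +
            ENNReal.ofReal B * (ENNReal.ofReal B *
              ∑ i ∈ Finset.range (n + 1),
                ENNReal.ofReal B ^ (n - i) * (Kop S m a)^[i] (fun _ => 1) x) :=
          add_le_add_right (mul_le_mul_right h2 _) _
      _ = ENNReal.ofReal B *
            ∑ i ∈ Finset.range (n + 1 + 1),
              ENNReal.ofReal B ^ (n + 1 - i) * (Kop S m a)^[i] (fun _ => 1) x := by
          have hsum : ∑ i ∈ Finset.range (n + 1 + 1),
              ENNReal.ofReal B ^ (n + 1 - i) * (Kop S m a)^[i] (fun _ => 1) x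
              = (Kop S m a)^[n + 1] (fun _ => 1) x +
                ENNReal.ofReal B * ∑ i ∈ Finset.range (n + 1),
                  ENNReal.ofReal B ^ (n - i) * (Kop S m a)^[i] (fun _ => 1) x := by
            rw [Finset.sum_range_succ, Nat.sub_self, pow_zero, one_mul, add_comm,
              Finset.mul_sum]
            congr 1
            refine Finset.sum_congr rfl fun i hi => ?_
            have hin : i ≤ n := Nat.lt_succ_iff.mp (Finset.mem_range.mp hi)
            rw [← mul_assoc, ← pow_succ', Nat.succ_sub hin]
          rw [hsum, mul_add]
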